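/- The matrix V₀ = Re J + √(G⁻¹) |√G (Im J) √G| √(G⁻¹) is a real symmetric matrix satisfying V₀ ≥ J in the Loewner order of complex Hermitian matrices, and Tr(G V₀) = Tr(G·Re J) + Tr|√G (Im J) √G|. -/

import Mathlib

open Matrix
open scoped ComplexOrder
noncomputable section

/-- Square root of a positive semidefinite matrix (removed from Mathlib; old definition). -/
def Matrix.PosSemidef.sqrt {n 𝕜 : Type*} [Fintype n] [DecidableEq n] [RCLike 𝕜]
    {A : Matrix n n 𝕜} (hA : A.PosSemidef) : Matrix n n 𝕜 :=
  (hA.1.eigenvectorUnitary : Matrix n n 𝕜) * diagonal ((↑) ∘ (√·) ∘ hA.1.eigenvalues) *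
    (star hA.1.eigenvectorUnitary : Matrix n n 𝕜)

section SqrtPort
open scoped MatrixOrder

namespace Matrix.PosSemidef

variable {n 𝕜 : Type*} [Fintype n] [DecidableEq n] [RCLike 𝕜]

lemma sqrt_eq_cfcSqrt {A : Matrix n n 𝕜} (hA : A.PosSemidef) : hA.sqrt = CFC.sqrt A := by
  rw [CFC.sqrt_eq_cfc, cfc_nnreal_eq_real _ A hA.nonneg, hA.1.cfc_eq]
  simp only [IsHermitian.cfc, Unitary.conjStarAlgAut_apply, Matrix.PosSemidef.sqrt]
  congr 3
  funext i
  simp [max_eq_left (hA.eigenvalues_nonneg i)]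

lemma posSemidef_sqrt {A : Matrix n n 𝕜} (hA : A.PosSemidef) : hA.sqrt.PosSemidef := by
  rw [sqrt_eq_cfcSqrt]
  exact Matrix.nonneg_iff_posSemidef.mp (CFC.sqrt_nonneg A)

lemma sq_sqrt {A : Matrix n n 𝕜} (hA : A.PosSemidef) : hA.sqrt ^ 2 = A := by
  rw [sqrt_eq_cfcSqrt]
  exact CFC.sq_sqrt A hA.nonneg

lemma sqrt_mul_self {A : Matrix n n 𝕜} (hA : A.PosSemidef) : hA.sqrt * hA.sqrt = A := by
  rw [sqrt_eq_cfcSqrt]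
  exact CFC.sqrt_mul_sqrt_self A hA.nonneg

lemma eq_sqrt_of_sq_eq {A B : Matrix n n 𝕜} (hB : B.PosSemidef) (hA : A.PosSemidef)
    (h : B ^ 2 = A) : B = hA.sqrt := by
  rw [sqrt_eq_cfcSqrt]
  exact (CFC.sqrt_unique (by rw [← sq]; exact h) hB.nonneg).symm

end Matrix.PosSemidef

end SqrtPort

/-- Entrywise real part, as a complex matrix. -/
def reM {m n : Type*} (J : Matrix m n ℂ) : Matrix m n ℂ := fun i j => ((J i j).re : ℂ)

/-- Entrywise imaginary part, as a complex matrix. -/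
def imM {m n : Type*} (J : Matrix m n ℂ) : Matrix m n ℂ := fun i j => ((J i j).im : ℂ)

/-- A complex matrix has all real entries. -/
def IsRealMat {m n : Type*} (A : Matrix m n ℂ) : Prop := ∀ i j, (A i j).im = 0

/-- Matrix absolute value `|A| = √(Aᴴ A)`. -/
def matAbs {n : Type*} [Fintype n] [DecidableEq n] (A : Matrix n n ℂ) : Matrix n n ℂ :=
  (Matrix.posSemidef_conjTranspose_mul_self A).sqrt

namespace AuxReal

variable {n : Type*} [Fintype n] [DecidableEq n]

/-- conjugation of a PSD matrix is PSD -/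
lemma conj_psd {A : Matrix n n ℂ} (hA : A.PosSemidef) :
    (A.map (starRingEnd ℂ)).PosSemidef := by
  have h : A.map (starRingEnd ℂ) = Aᵀ := by
    ext i j
    have := congr_fun (congr_fun hA.1 j) i
    rw [conjTranspose_apply] at this
    simp only [Matrix.map_apply, Matrix.transpose_apply, ← this]
    rfl
  rw [h]
  exact hA.transpose

/-- the sqrt of a real PSD matrix is real (conjugation-fixed) -/
lemma sqrt_conj_fixed {A : Matrix n n ℂ} (hA : A.PosSemidef)
    (h : A.map (starRingEnd ℂ) = A) :
    hA.sqrt.map (starRingEnd ℂ) = hA.sqrt := by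
  have hC := conj_psd hA.posSemidef_sqrt
  have hsq : (hA.sqrt.map (starRingEnd ℂ)) ^ 2 = A := by
    rw [pow_two, ← Matrix.map_mul, ← pow_two, hA.sq_sqrt, h]
  exact hC.eq_sqrt_of_sq_eq hA hsq

/-- `√(H²) - H` is PSD for Hermitian `H`. -/
lemma sqrt_sq_sub_psd {H B : Matrix n n ℂ} (hH : H.IsHermitian) (hB : B.PosSemidef)
    (hHB : H ^ 2 = B) : (hB.sqrt - H).PosSemidef := by
  set U := (hH.eigenvectorUnitary : Matrix n n ℂ) with hUdef
  have hUU : star U * U = 1 := hH.eigenvectorUnitary.2.1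
  set D := Matrix.diagonal ((↑) ∘ hH.eigenvalues : n → ℂ) with hD
  set P := Matrix.diagonal (fun i => ((|hH.eigenvalues i| : ℝ) : ℂ)) with hP
  have hPdiag : (Matrix.diagonal (fun i => ((|hH.eigenvalues i| : ℝ) : ℂ))).PosSemidef := by
    refine Matrix.posSemidef_diagonal_iff.mpr fun i => ?_
    exact Complex.zero_le_real.mpr (abs_nonneg _)
  have hPpsd : (U * P * star U).PosSemidef := by
    rw [Matrix.star_eq_conjTranspose]
    exact hPdiag.mul_mul_conjTranspose_same U
  have hspec : H = U * D * star U := hH.spectral_theorem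
  have mulform : ∀ X Y : Matrix n n ℂ,
      (U * X * star U) * (U * Y * star U) = U * (X * Y) * star U := by
    intro X Y
    calc (U * X * star U) * (U * Y * star U)
        = U * X * (star U * U) * Y * star U := by noncomm_ring
      _ = U * (X * Y) * star U := by rw [hUU]; noncomm_ring
  have hPP : P * P = D * D := by
    rw [hP, hD, Matrix.diagonal_mul_diagonal, Matrix.diagonal_mul_diagonal]
    congr 1
    funext i
    simp only [Function.comp_apply, ← Complex.ofReal_mul, abs_mul_abs_self]
  have key : (U * P * star U) ^ 2 = B := by
    rw [← hHB, hspec, pow_two, pow_two, mulform, mulform, hPP]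
  have hsqrt : U * P * star U = hB.sqrt := hPpsd.eq_sqrt_of_sq_eq hB key
  rw [← hsqrt, hspec]
  have hfac : U * P * star U - U * D * star U = U * (P - D) * star U := by
    rw [Matrix.mul_sub, Matrix.sub_mul]
  rw [hfac]
  have hsub : (P - D).PosSemidef := by
    rw [hP, hD]
    have : (Matrix.diagonal (fun i => ((|hH.eigenvalues i| : ℝ) : ℂ)))
        - Matrix.diagonal ((↑) ∘ hH.eigenvalues : n → ℂ)
        = Matrix.diagonal (fun i => ((|hH.eigenvalues i| - hH.eigenvalues i : ℝ) : ℂ)) := by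
      rw [Matrix.diagonal_sub]
      congr 1
      funext i
      push_cast
      rfl
    rw [this]
    refine Matrix.posSemidef_diagonal_iff.mpr fun i => ?_
    exact Complex.zero_le_real.mpr (by simp [abs_nonneg, le_abs_self, sub_nonneg])
  rw [Matrix.star_eq_conjTranspose]
  exact hsub.mul_mul_conjTranspose_same U

end AuxReal

/-- The matrix `V₀ = Re J + √(G⁻¹) |√G (Im J) √G| √(G⁻¹)` is real symmetric, satisfies
`V₀ ≥ J` in the Loewner order, and `Tr(G V₀) = Tr(G Re J) + Tr|√G (Im J) √G|`. -/
theorem optimal_real_majorant {d : ℕ} (J G : Matrix (Fin d) (Fin d) ℂ)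
    (hJ : J.PosSemidef) (hG : G.PosDef) (hGreal : IsRealMat G) :
    let s := hG.posSemidef.sqrt
    let sInv := (hG.inv).posSemidef.sqrt
    let V₀ := reM J + sInv * matAbs (s * imM J * s) * sInv
    IsRealMat V₀ ∧ V₀.IsHermitian ∧ (V₀ - J).PosSemidef ∧
      Matrix.trace (G * V₀) =
        Matrix.trace (G * reM J) + Matrix.trace (matAbs (s * imM J * s)) := by
  intro s sInv V₀
  set M := s * imM J * s with hM
  -- basic entries facts from hermitian-ness of J
  have hJH : Jᴴ = J := hJ.1
  have hJentry : ∀ i j, J i j = starRingEnd ℂ (J j i) := by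
    intro i j
    conv_lhs => rw [← hJH]
    rfl
  -- real part is Hermitian
  have hreH : (reM J).IsHermitian := by
    ext i j
    rw [conjTranspose_apply]
    simp only [reM]
    rw [hJentry j i]
    simp [Complex.conj_re]
  -- imaginary part: conjugate transpose is negation
  have himH : (imM J)ᴴ = -(imM J) := by
    ext i j
    rw [conjTranspose_apply]
    simp only [Matrix.neg_apply, imM]
    rw [hJentry j i]
    simp
  -- decomposition of J
  have hJdec : J - reM J = Complex.I • imM J := by
    ext i j
    show J i j - ((J i j).re : ℂ) = Complex.I * ((J i j).im : ℂ)
    linear_combination -1 * Complex.re_add_im (J i j)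
  -- s and sInv are Hermitian
  have hsH : sᴴ = s := hG.posSemidef.posSemidef_sqrt.1
  have hsInvH : sInvᴴ = sInv := (hG.inv).posSemidef.posSemidef_sqrt.1
  -- s * s = G
  have hss : s * s = G := hG.posSemidef.sqrt_mul_self
  -- invertibility of s
  have hGdet : IsUnit G.det := (Matrix.isUnit_iff_isUnit_det G).mp hG.isUnit
  have hs_rinv : s * (s * G⁻¹) = 1 := by
    rw [← mul_assoc, hss, Matrix.mul_nonsing_inv G hGdet]
  have hsinv_eq : s⁻¹ = s * G⁻¹ := Matrix.inv_eq_right_inv hs_rinv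
  have hs_mul_inv : s * s⁻¹ = 1 := by rw [hsinv_eq]; exact hs_rinv
  have hinv_mul_s : s⁻¹ * s = 1 := mul_eq_one_comm.mp hs_mul_inv
  -- s⁻¹ is PSD
  have hsinv_psd : (s⁻¹).PosSemidef := by
    have h1 : ((s⁻¹)ᴴ * s * s⁻¹).PosSemidef :=
      hG.posSemidef.posSemidef_sqrt.conjTranspose_mul_mul_same (s⁻¹)
    have h2 : (s⁻¹)ᴴ * s * s⁻¹ = s⁻¹ := by
      rw [Matrix.conjTranspose_nonsing_inv, hsH, mul_assoc, hs_mul_inv, mul_one]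
    rwa [h2] at h1
  -- sInv = s⁻¹
  have hsinv_sq : (s⁻¹) ^ 2 = G⁻¹ := by
    rw [pow_two, ← Matrix.mul_inv_rev, hss]
  have hsInv_eq : sInv = s⁻¹ :=
    (hsinv_psd.eq_sqrt_of_sq_eq (hG.inv).posSemidef hsinv_sq).symm
  have hsInv_s : sInv * s = 1 := by rw [hsInv_eq]; exact hinv_mul_s
  have hs_sInv : s * sInv = 1 := by rw [hsInv_eq]; exact hs_mul_inv
  -- conjugation-fixedness (realness) facts
  have hGconj : G.map (starRingEnd ℂ) = G := by
    ext i j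
    simp only [Matrix.map_apply]
    exact Complex.conj_eq_iff_im.mpr (hGreal i j)
  have hGinvconj : G⁻¹.map (starRingEnd ℂ) = G⁻¹ := by
    have h1 : G⁻¹ * G = 1 := Matrix.nonsing_inv_mul G hGdet
    have hone : (1 : Matrix (Fin d) (Fin d) ℂ).map (starRingEnd ℂ) = 1 := by
      ext i j
      simp [Matrix.map_apply, Matrix.one_apply, apply_ite]
    have h2 := congrArg (fun A : Matrix (Fin d) (Fin d) ℂ => A.map (starRingEnd ℂ)) h1
    rw [Matrix.map_mul, hGconj, hone] at h2
    exact (Matrix.inv_eq_left_inv h2).symm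
  have hsconj : s.map (starRingEnd ℂ) = s :=
    AuxReal.sqrt_conj_fixed hG.posSemidef hGconj
  have hsInvconj : sInv.map (starRingEnd ℂ) = sInv :=
    AuxReal.sqrt_conj_fixed (hG.inv).posSemidef hGinvconj
  have hreconj : (reM J).map (starRingEnd ℂ) = reM J := by
    ext i j; simp [Matrix.map_apply, reM, Complex.conj_ofReal]
  have himconj : (imM J).map (starRingEnd ℂ) = imM J := by
    ext i j; simp [Matrix.map_apply, imM, Complex.conj_ofReal]
  have hMconj : M.map (starRingEnd ℂ) = M := by
    rw [hM, Matrix.map_mul, Matrix.map_mul, hsconj, himconj]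
  -- M is "anti-Hermitian"
  have hMH : Mᴴ = -M := by
    rw [hM, Matrix.conjTranspose_mul, Matrix.conjTranspose_mul, hsH, himH]
    noncomm_ring
  -- matAbs M facts
  have hAbs_psd : (matAbs M).PosSemidef :=
    (Matrix.posSemidef_conjTranspose_mul_self M).posSemidef_sqrt
  have hAbsH : (matAbs M)ᴴ = matAbs M := hAbs_psd.1
  have hMHMconj : (Mᴴ * M).map (starRingEnd ℂ) = Mᴴ * M := by
    rw [Matrix.map_mul, hMH]
    have : (-M).map (starRingEnd ℂ) = -(M.map (starRingEnd ℂ)) := by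
      ext i j; simp [Matrix.map_apply]
    rw [this, hMconj]
  have hAbsconj : (matAbs M).map (starRingEnd ℂ) = matAbs M :=
    AuxReal.sqrt_conj_fixed (Matrix.posSemidef_conjTranspose_mul_self M) hMHMconj
  -- key PSD fact: matAbs M - I • M is PSD
  have hHH : (Complex.I • M).IsHermitian := by
    rw [Matrix.IsHermitian, Matrix.conjTranspose_smul, hMH]
    simp [Complex.conj_I]
  have hHsq : (Complex.I • M) ^ 2 = Mᴴ * M := by
    rw [pow_two, Matrix.smul_mul, Matrix.mul_smul, smul_smul, Complex.I_mul_I, hMH,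
      Matrix.neg_mul]
    simp
  have hkey : (matAbs M - Complex.I • M).PosSemidef :=
    AuxReal.sqrt_sq_sub_psd hHH (Matrix.posSemidef_conjTranspose_mul_self M) hHsq
  -- sInv * M * sInv = imM J
  have hsms : sInv * M * sInv = imM J := by
    rw [hM]
    calc sInv * (s * imM J * s) * sInv
        = (sInv * s) * imM J * (s * sInv) := by noncomm_ring
      _ = imM J := by rw [hsInv_s, hs_sInv, Matrix.one_mul, Matrix.mul_one]
  -- V₀ - J
  have hdiff : V₀ - J = sInv * (matAbs M - Complex.I • M) * sInv := by
    show reM J + sInv * matAbs M * sInv - J = _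
    rw [Matrix.mul_sub, Matrix.sub_mul]
    rw [Matrix.mul_smul, Matrix.smul_mul, hsms]
    rw [← hJdec]
    abel
  refine ⟨?_, ?_, ?_, ?_⟩
  · -- real
    intro i j
    have hV : V₀.map (starRingEnd ℂ) = V₀ := by
      show (reM J + sInv * matAbs M * sInv).map (starRingEnd ℂ) = _
      have hadd : ∀ A B : Matrix (Fin d) (Fin d) ℂ,
          (A + B).map (starRingEnd ℂ) = A.map (starRingEnd ℂ) + B.map (starRingEnd ℂ) := by
        intro A B; ext i j; simp [Matrix.map_apply]
      rw [hadd, hreconj, Matrix.map_mul, Matrix.map_mul, hsInvconj, hAbsconj]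
    have := congr_fun (congr_fun hV i) j
    simp only [Matrix.map_apply] at this
    exact Complex.conj_eq_iff_im.mp this
  · -- Hermitian
    show (reM J + sInv * matAbs M * sInv).IsHermitian
    rw [Matrix.IsHermitian, Matrix.conjTranspose_add, hreH.eq,
      Matrix.conjTranspose_mul, Matrix.conjTranspose_mul, hsInvH, hAbsH]
    rw [mul_assoc]
  · -- PSD
    rw [hdiff]
    have := hkey.mul_mul_conjTranspose_same sInv
    rwa [hsInvH] at this
  · -- trace
    show Matrix.trace (G * (reM J + sInv * matAbs M * sInv)) = _
    rw [Matrix.mul_add, Matrix.trace_add]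
    congr 1
    have hGform : G * (sInv * matAbs M * sInv) = s * (matAbs M * sInv) := by
      calc G * (sInv * matAbs M * sInv)
          = (s * (s * sInv)) * (matAbs M * sInv) := by rw [← hss]; noncomm_ring
        _ = s * (matAbs M * sInv) := by rw [hs_sInv, Matrix.mul_one]
    rw [hGform, Matrix.trace_mul_comm, mul_assoc, hsInv_s, Matrix.mul_one]
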